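/- Let 0 < t < 1 and β > 0 be real numbers, and let H be a hypergraph on a finite vertex set V with |V| = n ≥ 1. Suppose that for every nonempty subset S ⊆ V, there is a subset of S of size at least β·|S|^t that contains no hyperedge of H that is contained in S. Then H admits a proper coloring using at most n^{1−t}/(β(1−t)) + 1 colors. -/

import Mathlib

/-- Key potential drop: if `0 < i ≤ s`, `β * s^t ≤ i`, `1 ≤ s`, `0<t<1`, then
`(s - i)^(1-t) + β*(1-t) ≤ s^(1-t)`. -/
lemma potential_drop (t β s i : ℝ) (ht0 : 0 < t) (ht1 : t < 1) (hβ : 0 < β)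
    (hs : 1 ≤ s) (hi : i ≤ s) (hβi : β * s ^ t ≤ i) :
    (s - i) ^ (1 - t) + β * (1 - t) ≤ s ^ (1 - t) := by
  have hs0 : 0 < s := lt_of_lt_of_le one_pos hs
  have hp0 : (0:ℝ) ≤ 1 - t := by linarith
  have hp1 : (1:ℝ) - t ≤ 1 := by linarith
  have hu : -1 ≤ -(i / s) := by
    rw [neg_le_neg_iff]
    exact div_le_one_of_le₀ hi hs0.le
  have hb := rpow_one_add_le_one_add_mul_self hu hp0 hp1
  have hfac : s - i = s * (1 + -(i / s)) := by
    field_simp; ring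
  have hsi0 : 0 ≤ s - i := by linarith
  have key : (s - i) ^ (1 - t) ≤ s ^ (1 - t) * (1 + (1 - t) * -(i / s)) := by
    rw [hfac, Real.mul_rpow hs0.le (by linarith)]
    exact mul_le_mul_of_nonneg_left hb (Real.rpow_nonneg hs0.le _)
  have hst : s ^ (1 - t) * (i / s) = i * s ^ (-t) := by
    rw [show (1:ℝ) - t = -t + 1 by ring, Real.rpow_add hs0, Real.rpow_one]
    field_simp
  have hmain : β ≤ i * s ^ (-t) := by
    have h1 : β * s ^ t * s ^ (-t) ≤ i * s ^ (-t) :=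
      mul_le_mul_of_nonneg_right hβi (Real.rpow_nonneg hs0.le _)
    calc β = β * (s ^ t * s ^ (-t)) := by
              rw [← Real.rpow_add hs0]; simp
      _ = β * s ^ t * s ^ (-t) := by ring
      _ ≤ i * s ^ (-t) := h1
  have : s ^ (1 - t) * (1 + (1 - t) * -(i / s))
      = s ^ (1 - t) - (1 - t) * (i * s ^ (-t)) := by
    rw [← hst]; ring
  rw [this] at key
  nlinarith [Real.rpow_nonneg hs0.le (1 - t)]

/-- If every nonempty induced subhypergraph on `S` has an independent set
of size at least `β * |S| ^ t`, then the hypergraph has a proper coloring with at most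
`n ^ (1 - t) / (β * (1 - t)) + 1` colors. -/
theorem chromatic_bound_from_hereditary_independence
    {α : Type*} [DecidableEq α]
    (t β : ℝ) (ht0 : 0 < t) (ht1 : t < 1) (hβ : 0 < β)
    (V : Finset α) (H : Finset (Finset α)) (hHV : ∀ e ∈ H, e ⊆ V)
    (n : ℕ) (hn : V.card = n) (hn1 : 1 ≤ n)
    (hind : ∀ S ⊆ V, S.Nonempty →
      ∃ I ⊆ S, β * (S.card : ℝ) ^ t ≤ (I.card : ℝ) ∧ ∀ e ∈ H, e ⊆ S → ¬ e ⊆ I) :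
    ∃ (m : ℕ) (c : α → Fin m),
      (m : ℝ) ≤ (n : ℝ) ^ (1 - t) / (β * (1 - t)) + 1 ∧
      ∀ e ∈ H, ¬ ∃ j, ∀ v ∈ e, c v = j := by
  have hV : V.Nonempty := by
    rw [← Finset.card_pos, hn]; omega
  have hne : ∅ ∉ H := by
    intro h0
    obtain ⟨I, hIS, _, hIind⟩ := hind V le_rfl hV
    exact hIind ∅ h0 (Finset.empty_subset _) (Finset.empty_subset _)
  have key : ∀ k : ℕ, ∀ S ⊆ V, S.card ≤ k →
      ∃ (m : ℕ) (c : α → Fin m),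
        ((m : ℝ) - 1) * (β * (1 - t)) ≤ (S.card : ℝ) ^ (1 - t) ∧
        ∀ e ∈ H, e ⊆ S → ¬ ∃ j, ∀ v ∈ e, c v = j := by
    intro k
    induction k with
    | zero =>
      intro S _ hcard
      have hS0 : S = ∅ := Finset.card_eq_zero.mp (Nat.le_zero.mp hcard)
      subst hS0
      refine ⟨1, fun _ => 0, by norm_num; positivity, ?_⟩
      rintro e heH heS ⟨j, _⟩
      rw [Finset.subset_empty] at heS
      exact hne (heS ▸ heH)
    | succ k ih =>
      intro S hSV hcard
      rcases S.eq_empty_or_nonempty with rfl | hSne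
      · refine ⟨1, fun _ => 0, by norm_num; positivity, ?_⟩
        rintro e heH heS ⟨j, _⟩
        rw [Finset.subset_empty] at heS
        exact hne (heS ▸ heH)
      · obtain ⟨I, hIS, hIcard, hIind⟩ := hind S hSV hSne
        have hs1 : 1 ≤ S.card := hSne.card_pos
        have hspos : (0:ℝ) < (S.card : ℝ) := by exact_mod_cast hs1
        have hIpos : (0:ℝ) < (I.card : ℝ) := by
          have : (0:ℝ) < β * (S.card : ℝ) ^ t :=
            mul_pos hβ (Real.rpow_pos_of_pos hspos t)
          linarith
        have hIne : I.Nonempty := by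
          rw [← Finset.card_pos]; exact_mod_cast hIpos
        have hcardlt : (S \ I).card ≤ k := by
          have h1 : (S \ I).card = S.card - I.card := Finset.card_sdiff_of_subset hIS
          have h2 : 1 ≤ I.card := hIne.card_pos
          omega
        obtain ⟨m, c, hm, hc⟩ := ih (S \ I) (Finset.Subset.trans (Finset.sdiff_subset) hSV) hcardlt
        refine ⟨m + 1, fun v => if v ∈ I then Fin.last m else (c v).castSucc, ?_, ?_⟩
        · have hcast : ((S \ I).card : ℝ) = (S.card : ℝ) - (I.card : ℝ) := by
            rw [Finset.card_sdiff_of_subset hIS]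
            have := Finset.card_le_card hIS
            push_cast [Nat.cast_sub this]
            ring
          have hdrop := potential_drop t β (S.card : ℝ) (I.card : ℝ) ht0 ht1 hβ
            (by exact_mod_cast hs1) (by exact_mod_cast Finset.card_le_card hIS) hIcard
          rw [hcast] at hm
          push_cast
          nlinarith
        · rintro e heH heS ⟨j, hj⟩
          have hene : e.Nonempty := by
            rcases e.eq_empty_or_nonempty with rfl | h
            · exact absurd heH hne
            · exact h
          by_cases hmem : ∃ v ∈ e, v ∈ I
          · obtain ⟨v0, hv0e, hv0I⟩ := hmem
            have hj0 : j = Fin.last m := by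
              have := hj v0 hv0e; simp [hv0I] at this; omega
            have heI : e ⊆ I := by
              intro v hv
              by_contra hvI
              have := hj v hv
              simp [hvI, hj0] at this
            exact hIind e heH heS heI
          · push_neg at hmem
            have heSI : e ⊆ S \ I := fun v hv =>
              Finset.mem_sdiff.mpr ⟨heS hv, hmem v hv⟩
            obtain ⟨v0, hv0⟩ := hene
            refine hc e heH heSI ⟨c v0, fun v hv => ?_⟩
            have h1 := hj v hv
            have h2 := hj v0 hv0
            simp [hmem v hv, hmem v0 hv0] at h1 h2
            rw [← h2] at h1
            exact Fin.castSucc_injective m h1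
  obtain ⟨m, c, hm, hc⟩ := key V.card V le_rfl le_rfl
  refine ⟨m, c, ?_, fun e heH => hc e heH (hHV e heH)⟩
  have hpos : (0:ℝ) < β * (1 - t) := mul_pos hβ (by linarith)
  rw [hn] at hm
  have h1 : (m:ℝ) - 1 ≤ (n : ℝ) ^ (1 - t) / (β * (1 - t)) := by
    rw [le_div_iff₀ hpos]; exact hm
  linarith
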